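/- Let Q be an r×r real matrix, U a v×r real matrix and V an r×v real matrix such that U·V = I_v and V·U·Q·V = Q·V. Then for every real t, U·exp(tQ)·V = exp(t·(U·Q·V)), where exp denotes the matrix exponential. -/

import Mathlib

attribute [local instance] Matrix.linftyOpNormedAddCommGroup Matrix.linftyOpNormedSpace
  Matrix.linftyOpNormedRing Matrix.linftyOpNormedAlgebra

open NormedSpace in
theorem lumped_semigroup_eq_exp_lumped_generator (r v : ℕ)
    (Q : Matrix (Fin r) (Fin r) ℝ) (U : Matrix (Fin v) (Fin r) ℝ)
    (V : Matrix (Fin r) (Fin v) ℝ)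
    (hUV : U * V = 1) (hQ : V * U * Q * V = Q * V) (t : ℝ) :
    U * exp (t • Q) * V = exp (t • (U * Q * V)) := by
  have hQV : Q * V = V * (U * Q * V) := by
    rw [← hQ]; simp only [Matrix.mul_assoc]
  have h1 : (t • Q) * V = V * (t • (U * Q * V)) := by
    rw [Matrix.smul_mul, hQV, Matrix.mul_smul]
  have hpow : ∀ n : ℕ, (t • Q) ^ n * V = V * (t • (U * Q * V)) ^ n := by
    intro n; induction n with
    | zero => simp
    | succ n ih => rw [pow_succ, pow_succ, Matrix.mul_assoc, h1, ← Matrix.mul_assoc, ih, Matrix.mul_assoc]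
  -- right multiplication by V as a continuous linear map
  let LR : Matrix (Fin r) (Fin r) ℝ →L[ℝ] Matrix (Fin r) (Fin v) ℝ :=
    LinearMap.toContinuousLinearMap
      { toFun := fun X => X * V
        map_add' := fun X Y => Matrix.add_mul X Y V
        map_smul' := fun c X => Matrix.smul_mul c X V }
  let LL : Matrix (Fin v) (Fin v) ℝ →L[ℝ] Matrix (Fin r) (Fin v) ℝ :=
    LinearMap.toContinuousLinearMap
      { toFun := fun X => V * X
        map_add' := fun X Y => Matrix.mul_add V X Y
        map_smul' := fun c X => Matrix.mul_smul V c X }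
  have key : exp (t • Q) * V = V * exp (t • (U * Q * V)) := by
    have hT : LR (exp (t • Q)) = LL (exp (t • (U * Q * V))) := by
      rw [exp_eq_tsum (𝕂 := ℝ), exp_eq_tsum (𝕂 := ℝ)]
      beta_reduce
      erw [
        (expSeries_summable' (𝕂 := ℝ) (t • Q)).map_tsum LR LR.continuous,
        (expSeries_summable' (𝕂 := ℝ) (t • (U * Q * V))).map_tsum LL LL.continuous]
      refine tsum_congr fun n => ?_
      simp only [LR, LL, LinearMap.coe_toContinuousLinearMap', LinearMap.coe_mk, AddHom.coe_mk]
      rw [Matrix.smul_mul, Matrix.mul_smul, hpow]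
    simpa [LR, LL] using hT
  rw [Matrix.mul_assoc, key, ← Matrix.mul_assoc, hUV, Matrix.one_mul]
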